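/- For any pure state |ψ⟩ in dimension d and any complete projective measurement Π, the trace distance ½‖|ψ⟩⟨ψ| − Π[|ψ⟩⟨ψ|]‖₁ ≤ 1 − 1/d, with equality when |ψ⟩ is unbiased with respect to the measurement basis (i.e., all pᵢ = 1/d). -/

import Mathlib

open Matrix Kronecker BigOperators
open scoped ComplexOrder

/-- Trace norm (Schatten 1-norm): `Tr √(XᴴX)`. -/
noncomputable def traceNorm {m n : Type*} [Fintype m] [Fintype n] [DecidableEq n]
    (X : Matrix m n ℂ) : ℝ :=
  (((Matrix.posSemidef_conjTranspose_mul_self X).1.eigenvectorUnitary.1 *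
      Matrix.diagonal (((↑) : ℝ → ℂ) ∘ Real.sqrt ∘ (Matrix.posSemidef_conjTranspose_mul_self X).1.eigenvalues) *
      (star (Matrix.posSemidef_conjTranspose_mul_self X).1.eigenvectorUnitary : Matrix n n ℂ)).trace).re


/-- Complete projective measurement in the orthonormal basis `e`. -/
noncomputable def projMeas {d : ℕ} (e : Fin d → Fin d → ℂ)
    (τ : Matrix (Fin d) (Fin d) ℂ) : Matrix (Fin d) (Fin d) ℂ :=
  ∑ i, Matrix.vecMulVec (e i) (star (e i)) * τ * Matrix.vecMulVec (e i) (star (e i))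

namespace D11
set_option linter.unusedSectionVars false
variable {n : Type*} [Fintype n] [DecidableEq n]

open scoped MatrixOrder

lemma traceNorm_eq_sqrt {m : Type*} [Fintype m] (X : Matrix m n ℂ) :
    traceNorm X = (CFC.sqrt (Xᴴ * X)).trace.re := by
  have hA := Matrix.posSemidef_conjTranspose_mul_self X
  rw [traceNorm, CFC.sqrt_eq_cfc, cfc_nnreal_eq_real _ _ hA.nonneg, hA.1.cfc_eq,
    Matrix.IsHermitian.cfc, Unitary.conjStarAlgAut_apply]
  congr 5
  funext i
  simp [Real.coe_sqrt, Real.coe_toNNReal', hA.eigenvalues_nonneg i]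

lemma eq_sqrt_of_sq_eq' {A Y : Matrix n n ℂ} (hA : A.PosSemidef) (hY : Y.PosSemidef)
    (h : Y ^ 2 = A) : Y = CFC.sqrt A :=
  ((CFC.sqrt_eq_iff A Y hA.nonneg hY.nonneg).2 (by rw [← sq]; exact h)).symm

lemma traceNorm_of_sq_eq {X Y : Matrix n n ℂ} (hY : Y.PosSemidef) (h : Y ^ 2 = Xᴴ * X) :
    traceNorm X = Y.trace.re := by
  rw [traceNorm_eq_sqrt, ← eq_sqrt_of_sq_eq' (Matrix.posSemidef_conjTranspose_mul_self X) hY h]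

lemma vecMulVec_mulVec (u v w : n → ℂ) :
    Matrix.vecMulVec u v *ᵥ w = (v ⬝ᵥ w) • u := by
  ext i
  simp only [Matrix.mulVec, Matrix.vecMulVec_apply, dotProduct, Pi.smul_apply,
    smul_eq_mul, Finset.sum_mul]
  exact Finset.sum_congr rfl fun j _ => by ring

lemma vecMulVec_mul_vecMulVec (u v x y : n → ℂ) :
    Matrix.vecMulVec u v * Matrix.vecMulVec x y = (v ⬝ᵥ x) • Matrix.vecMulVec u y := by
  ext i j
  simp only [Matrix.mul_apply, Matrix.vecMulVec_apply, Matrix.smul_apply, dotProduct,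
    smul_eq_mul, Finset.sum_mul]
  exact Finset.sum_congr rfl fun k _ => by ring

lemma mul_conj_self (z : ℂ) : z * (starRingEnd ℂ) z = ((‖z‖^2 : ℝ) : ℂ) := by
  rw [Complex.mul_conj']; norm_cast

lemma conj_mul_self (z : ℂ) : (starRingEnd ℂ) z * z = ((‖z‖^2 : ℝ) : ℂ) := by
  rw [mul_comm]; exact mul_conj_self z

lemma star_dot_comm (x y : n → ℂ) : star x ⬝ᵥ y = starRingEnd ℂ (star y ⬝ᵥ x) := by
  simp only [dotProduct, Pi.star_apply, map_sum, RingHom.map_mul]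
  exact Finset.sum_congr rfl fun k _ => by simp [mul_comm, Complex.star_def]

lemma star_dot_self (x : n → ℂ) : star x ⬝ᵥ x = ((∑ i, ‖x i‖^2 : ℝ) : ℂ) := by
  push_cast
  simp only [dotProduct, Pi.star_apply, Complex.star_def]
  exact Finset.sum_congr rfl fun k _ => by
    rw [mul_comm, Complex.mul_conj']

lemma dot_sum_right {ι : Type*} [Fintype ι] (v : n → ℂ) (f : ι → n → ℂ) :
    v ⬝ᵥ (∑ i, f i) = ∑ i, v ⬝ᵥ f i := by
  simp only [dotProduct, Finset.sum_apply, Finset.mul_sum]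
  rw [Finset.sum_comm]

lemma sum_mulVec {ι : Type*} [Fintype ι] (f : ι → Matrix n n ℂ) (w : n → ℂ) :
    (∑ i, f i) *ᵥ w = ∑ i, f i *ᵥ w := by
  ext j
  simp only [Matrix.mulVec, dotProduct, Finset.sum_apply, Matrix.sum_apply,
    Finset.sum_mul]
  rw [Finset.sum_comm]

lemma conjT_vecMulVec (w : n → ℂ) :
    (Matrix.vecMulVec w (star w))ᴴ = Matrix.vecMulVec w (star w) := by
  ext i j
  simp [Matrix.conjTranspose_apply, Matrix.vecMulVec_apply, mul_comm]

lemma traceNorm_of_hermitian {X : Matrix n n ℂ} (hX : X.IsHermitian) :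
    traceNorm X = ∑ i, |hX.eigenvalues i| := by
  classical
  set U : Matrix n n ℂ := (hX.eigenvectorUnitary : Matrix n n ℂ) with hU
  have hUmem : U ∈ Matrix.unitaryGroup n ℂ := hX.eigenvectorUnitary.2
  have hUU : Uᴴ * U = 1 := by
    simpa [Matrix.star_eq_conjTranspose] using (Matrix.mem_unitaryGroup_iff'.mp hUmem)
  set D : Matrix n n ℂ := Matrix.diagonal (fun i => (hX.eigenvalues i : ℂ)) with hD
  set Dabs : Matrix n n ℂ := Matrix.diagonal (fun i => ((|hX.eigenvalues i| : ℝ) : ℂ)) with hDa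
  have hspec : X = U * D * Uᴴ := by
    simpa [Matrix.star_eq_conjTranspose, Function.comp_def] using hX.spectral_theorem
  set Y : Matrix n n ℂ := U * Dabs * Uᴴ with hY
  have hYpsd : Y.PosSemidef := by
    apply Matrix.PosSemidef.mul_mul_conjTranspose_same
    refine Matrix.posSemidef_diagonal_iff.mpr fun i => ?_
    exact_mod_cast Complex.zero_le_real.mpr (abs_nonneg _)
  have hsq : Y ^ 2 = Xᴴ * X := by
    have h1 : Xᴴ * X = X * X := by rw [hX.eq]
    rw [h1, hspec, pow_two, hY]
    have : ∀ E F : Matrix n n ℂ, (U * E * Uᴴ) * (U * F * Uᴴ) = U * (E * F) * Uᴴ := by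
      intro E F
      calc (U * E * Uᴴ) * (U * F * Uᴴ) = U * E * (Uᴴ * U) * F * Uᴴ := by
            simp only [Matrix.mul_assoc]
          _ = U * (E * F) * Uᴴ := by rw [hUU]; simp only [Matrix.mul_one, Matrix.mul_assoc]
    rw [this, this]
    congr 2
    rw [hD, hDa, Matrix.diagonal_mul_diagonal, Matrix.diagonal_mul_diagonal]
    exact congrArg Matrix.diagonal (funext fun i => by
      rw [← Complex.ofReal_mul, abs_mul_abs_self, Complex.ofReal_mul])
  have hYsqrt : Y = CFC.sqrt (Xᴴ * X) :=
    eq_sqrt_of_sq_eq' (Matrix.posSemidef_conjTranspose_mul_self X) hYpsd hsq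
  rw [traceNorm_eq_sqrt, ← hYsqrt, hY]
  rw [Matrix.trace_mul_cycle, hUU, Matrix.one_mul, hDa, Matrix.trace_diagonal]
  rw [← Complex.ofReal_sum, Complex.ofReal_re]

lemma trace_eq_sum_eigenvalues {X : Matrix n n ℂ} (hX : X.IsHermitian) :
    X.trace = ((∑ i, hX.eigenvalues i : ℝ) : ℂ) := by
  classical
  set U : Matrix n n ℂ := (hX.eigenvectorUnitary : Matrix n n ℂ) with hU
  have hUmem : U ∈ Matrix.unitaryGroup n ℂ := hX.eigenvectorUnitary.2
  have hUU : Uᴴ * U = 1 := by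
    simpa [Matrix.star_eq_conjTranspose] using (Matrix.mem_unitaryGroup_iff'.mp hUmem)
  have hspec : X = U * Matrix.diagonal (fun i => (hX.eigenvalues i : ℂ)) * Uᴴ := by
    simpa [Matrix.star_eq_conjTranspose, Function.comp_def] using hX.spectral_theorem
  conv_lhs => rw [hspec]
  rw [Matrix.trace_mul_cycle, hUU, Matrix.one_mul]
  push_cast
  simp [Matrix.trace_diagonal]

variable {d : ℕ}

lemma sum_proj (e : Fin d → Fin d → ℂ)
    (he : ∀ i j, star (e i) ⬝ᵥ e j = if i = j then 1 else 0) :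
    ∑ i, Matrix.vecMulVec (e i) (star (e i)) = (1 : Matrix (Fin d) (Fin d) ℂ) := by
  classical
  set U : Matrix (Fin d) (Fin d) ℂ := Matrix.of fun i j => star (e i j) with hUdef
  have h1 : U * Uᴴ = 1 := by
    ext i j
    have := he i j
    simp only [dotProduct, Pi.star_apply] at this
    simp only [Matrix.mul_apply, hUdef, Matrix.conjTranspose_apply, Matrix.of_apply,
      star_star, Matrix.one_apply]
    simpa using this
  have h2 : Uᴴ * U = 1 := mul_eq_one_comm.mp h1
  ext j k
  have := congrFun (congrFun h2 j) k
  simp only [Matrix.mul_apply, hUdef, Matrix.conjTranspose_apply, Matrix.of_apply,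
    star_star] at this
  simp only [Matrix.sum_apply, Matrix.vecMulVec_apply, Pi.star_apply]
  rw [this]

lemma expand_vec (e : Fin d → Fin d → ℂ)
    (he : ∀ i j, star (e i) ⬝ᵥ e j = if i = j then 1 else 0) (w : Fin d → ℂ) :
    ∑ i, (star (e i) ⬝ᵥ w) • e i = w := by
  have h := congrArg (· *ᵥ w) (sum_proj e he)
  simpa [sum_mulVec, vecMulVec_mulVec, Matrix.one_mulVec] using h

lemma dot_expand (e : Fin d → Fin d → ℂ)
    (he : ∀ i j, star (e i) ⬝ᵥ e j = if i = j then 1 else 0) (v w : Fin d → ℂ) :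
    star v ⬝ᵥ w = ∑ i, (star (e i) ⬝ᵥ w) * (star v ⬝ᵥ e i) := by
  conv_lhs => rw [← expand_vec e he w]
  rw [dot_sum_right]
  exact Finset.sum_congr rfl fun i _ => by
    rw [dotProduct_smul]
    simp [smul_eq_mul, mul_comm]

lemma parseval (e : Fin d → Fin d → ℂ)
    (he : ∀ i j, star (e i) ⬝ᵥ e j = if i = j then 1 else 0) (w : Fin d → ℂ) :
    ∑ i, ‖star (e i) ⬝ᵥ w‖^2 = ∑ i, ‖w i‖^2 := by
  have h := dot_expand e he w w
  rw [star_dot_self] at h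
  have h2 : ∑ i, (star (e i) ⬝ᵥ w) * (star w ⬝ᵥ e i)
      = ((∑ i, ‖star (e i) ⬝ᵥ w‖^2 : ℝ) : ℂ) := by
    push_cast
    exact Finset.sum_congr rfl fun i _ => by
      rw [star_dot_comm w (e i), Complex.mul_conj']
  rw [h2] at h
  exact_mod_cast h.symm

lemma key_bound (hd : 0 < d) (z : Fin d → ℂ) (hz : ∑ i, ‖z i‖ ≤ 1) :
    ‖∑ i, z i‖^2 - ∑ i, ‖z i‖^2 ≤ 1 - 1/d := by
  set t := ∑ i, ‖z i‖ with ht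
  have h0 : 0 ≤ t := Finset.sum_nonneg fun i _ => norm_nonneg _
  have h1 : ‖∑ i, z i‖ ≤ t := norm_sum_le _ _
  have h2 : ‖∑ i, z i‖^2 ≤ t^2 := by nlinarith [norm_nonneg (∑ i, z i)]
  have h3 : t^2 ≤ d * ∑ i, ‖z i‖^2 := by
    have := sq_sum_le_card_mul_sum_sq (s := (Finset.univ : Finset (Fin d)))
      (f := fun i => ‖z i‖)
    simpa [ht] using this
  have hd' : (0:ℝ) < d := by exact_mod_cast hd
  have hd1 : (1:ℝ) ≤ d := by exact_mod_cast hd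
  have h4 : t^2 / d ≤ ∑ i, ‖z i‖^2 := by
    rw [div_le_iff₀ hd']
    linarith [h3]
  have h5 : (0:ℝ) ≤ 1 - 1/d := by
    have : (1:ℝ)/d ≤ 1 := by rw [div_le_one hd']; exact hd1
    linarith
  have ht2 : t^2 ≤ 1 := by nlinarith
  have h6 : t^2 * (1 - 1/d) ≤ 1 - 1/d := by
    simpa using mul_le_mul_of_nonneg_right ht2 h5
  have h7 : t^2 - t^2/d = t^2 * (1 - 1/d) := by field_simp
  nlinarith [h4]

lemma cauchy_schwarz_dot (x y : n → ℂ) :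
    ‖star x ⬝ᵥ y‖^2 ≤ (∑ i, ‖x i‖^2) * (∑ i, ‖y i‖^2) := by
  have h1 : ‖star x ⬝ᵥ y‖ ≤ ∑ i, ‖x i‖ * ‖y i‖ := by
    refine (norm_sum_le _ _).trans ?_
    refine Finset.sum_le_sum fun i _ => ?_
    simp [Pi.star_apply, norm_mul]
  have h2 : (∑ i, ‖x i‖ * ‖y i‖)^2 ≤ (∑ i, ‖x i‖^2) * (∑ i, ‖y i‖^2) :=
    Finset.sum_mul_sq_le_sq_mul_sq _ _ _
  have h0 : (0:ℝ) ≤ ∑ i, ‖x i‖ * ‖y i‖ :=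
    Finset.sum_nonneg fun i _ => mul_nonneg (norm_nonneg _) (norm_nonneg _)
  nlinarith [norm_nonneg (star x ⬝ᵥ y)]

end D11

/-- for any pure state `|ψ⟩ ∈ ℂᵈ` and any complete projective measurement,
`½‖|ψ⟩⟨ψ| − Π[|ψ⟩⟨ψ|]‖₁ ≤ 1 − 1/d`, with equality when all `pᵢ = |⟨eᵢ|ψ⟩|² = 1/d`. -/
theorem disturbance_pure_le {d : ℕ} (hd : 0 < d)
    (ψ : Fin d → ℂ) (hψ : ∑ i, ‖ψ i‖^2 = 1)
    (e : Fin d → Fin d → ℂ)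
    (he : ∀ i j, star (e i) ⬝ᵥ e j = if i = j then 1 else 0) :
    (1 / 2) * traceNorm (Matrix.vecMulVec ψ (star ψ) - projMeas e (Matrix.vecMulVec ψ (star ψ)))
        ≤ 1 - 1 / d ∧
    ((∀ i, ‖star (e i) ⬝ᵥ ψ‖^2 = 1 / d) →
      (1 / 2) * traceNorm (Matrix.vecMulVec ψ (star ψ) - projMeas e (Matrix.vecMulVec ψ (star ψ)))
        = 1 - 1 / d) := by
  classical
  have hd' : (0:ℝ) < d := by exact_mod_cast hd
  set ρ : Matrix (Fin d) (Fin d) ℂ := Matrix.vecMulVec ψ (star ψ) with hρdef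
  have hψ1 : star ψ ⬝ᵥ ψ = 1 := by
    rw [D11.star_dot_self, hψ]; norm_num
  have hρ2 : ρ * ρ = ρ := by
    rw [hρdef, D11.vecMulVec_mul_vecMulVec, hψ1, one_smul]
  have hσ : projMeas e ρ
      = ∑ i, ((‖star (e i) ⬝ᵥ ψ‖^2 : ℝ) : ℂ) • Matrix.vecMulVec (e i) (star (e i)) := by
    unfold projMeas
    refine Finset.sum_congr rfl fun i _ => ?_
    rw [hρdef, D11.vecMulVec_mul_vecMulVec, Matrix.smul_mul, D11.vecMulVec_mul_vecMulVec,
      smul_smul]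
    congr 1
    rw [D11.star_dot_comm ψ (e i), D11.mul_conj_self]
  set σ := projMeas e ρ with hσdef
  set X := ρ - σ with hXdef
  have hhermρ : ρ.IsHermitian := D11.conjT_vecMulVec ψ
  have hhermσ : σ.IsHermitian := by
    show σᴴ = σ
    rw [hσ, Matrix.conjTranspose_sum]
    refine Finset.sum_congr rfl fun i _ => ?_
    rw [Matrix.conjTranspose_smul, D11.conjT_vecMulVec (e i)]
    congr 1
    simp [Complex.star_def, Complex.conj_ofReal]
  have hherm : X.IsHermitian := hhermρ.sub hhermσ
  have hQρ : ∀ v, star v ⬝ᵥ (ρ *ᵥ v) = ((‖star v ⬝ᵥ ψ‖^2 : ℝ) : ℂ) := by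
    intro v
    rw [hρdef, D11.vecMulVec_mulVec, dotProduct_smul, smul_eq_mul,
      D11.star_dot_comm ψ v, D11.conj_mul_self]
  have hQσ : ∀ v, star v ⬝ᵥ (σ *ᵥ v)
      = ((∑ i, ‖star (e i) ⬝ᵥ ψ‖^2 * ‖star (e i) ⬝ᵥ v‖^2 : ℝ) : ℂ) := by
    intro v
    rw [hσ, D11.sum_mulVec, D11.dot_sum_right]
    push_cast
    refine Finset.sum_congr rfl fun i _ => ?_
    rw [Matrix.smul_mulVec, D11.vecMulVec_mulVec, dotProduct_smul,
      dotProduct_smul, smul_eq_mul, smul_eq_mul,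
      D11.star_dot_comm v (e i), D11.mul_conj_self]
    norm_cast
  have hQX : ∀ v, star v ⬝ᵥ (X *ᵥ v)
      = ((‖star v ⬝ᵥ ψ‖^2 - ∑ i, ‖star (e i) ⬝ᵥ ψ‖^2 * ‖star (e i) ⬝ᵥ v‖^2 : ℝ) : ℂ) := by
    intro v
    rw [hXdef, Matrix.sub_mulVec, dotProduct_sub, hQρ v, hQσ v]
    push_cast
    ring
  have hbnd : ∀ v : Fin d → ℂ, (∑ i, ‖v i‖^2) = 1 →
      ‖star v ⬝ᵥ ψ‖^2 - ∑ i, ‖star (e i) ⬝ᵥ ψ‖^2 * ‖star (e i) ⬝ᵥ v‖^2 ≤ 1 - 1/(d:ℝ) := by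
    intro v hv
    set z : Fin d → ℂ := fun i => (star (e i) ⬝ᵥ ψ) * (starRingEnd ℂ (star (e i) ⬝ᵥ v))
      with hzdef
    have hzn : ∀ i, ‖z i‖ = ‖star (e i) ⬝ᵥ ψ‖ * ‖star (e i) ⬝ᵥ v‖ := by
      intro i; rw [hzdef]; simp [norm_mul]
    have hsumz : star v ⬝ᵥ ψ = ∑ i, z i := by
      rw [D11.dot_expand e he v ψ]
      exact Finset.sum_congr rfl fun i _ => by
        rw [hzdef]; dsimp only; congr 1; exact D11.star_dot_comm v (e i)
    have hz1 : ∑ i, ‖z i‖ ≤ 1 := by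
      have hC := Finset.sum_mul_sq_le_sq_mul_sq Finset.univ
        (fun i => ‖star (e i) ⬝ᵥ ψ‖) (fun i => ‖star (e i) ⬝ᵥ v‖)
      have hP1 : ∑ i, ‖star (e i) ⬝ᵥ ψ‖^2 = 1 := by rw [D11.parseval e he ψ, hψ]
      have hP2 : ∑ i, ‖star (e i) ⬝ᵥ v‖^2 = 1 := by rw [D11.parseval e he v, hv]
      rw [hP1, hP2] at hC
      have h0 : 0 ≤ ∑ i, ‖z i‖ := Finset.sum_nonneg fun i _ => norm_nonneg _
      have : ∑ i, ‖z i‖ = ∑ i, ‖star (e i) ⬝ᵥ ψ‖ * ‖star (e i) ⬝ᵥ v‖ :=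
        Finset.sum_congr rfl fun i _ => hzn i
      rw [this] at h0 ⊢
      nlinarith [hC]
    have hkey := D11.key_bound hd z hz1
    have heq1 : ‖star v ⬝ᵥ ψ‖^2 = ‖∑ i, z i‖^2 := by rw [hsumz]
    have heq2 : ∑ i, ‖star (e i) ⬝ᵥ ψ‖^2 * ‖star (e i) ⬝ᵥ v‖^2 = ∑ i, ‖z i‖^2 :=
      Finset.sum_congr rfl fun i _ => by rw [hzn i]; ring
    rw [heq1, heq2]
    exact hkey
  -- eigenvalue facts
  have htn : traceNorm X = ∑ i, |hherm.eigenvalues i| := D11.traceNorm_of_hermitian hherm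
  have hρtr : ρ.trace = 1 := by
    have h : ρ.trace = star ψ ⬝ᵥ ψ := by
      simp [hρdef, Matrix.trace, Matrix.diag, Matrix.vecMulVec_apply, dotProduct,
        mul_comm]
    rw [h, hψ1]
  have hσtr : σ.trace = 1 := by
    rw [hσ, Matrix.trace_sum]
    have h : ∀ i : Fin d, (((‖star (e i) ⬝ᵥ ψ‖^2 : ℝ):ℂ)
        • Matrix.vecMulVec (e i) (star (e i))).trace = ((‖star (e i) ⬝ᵥ ψ‖^2 : ℝ):ℂ) := by
      intro i
      rw [Matrix.trace_smul]
      have htr1 : (Matrix.vecMulVec (e i) (star (e i))).trace = star (e i) ⬝ᵥ e i := by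
        simp [Matrix.trace, Matrix.diag, Matrix.vecMulVec_apply, dotProduct, mul_comm]
      rw [htr1, he i i]
      simp
    simp_rw [h]
    rw [← Complex.ofReal_sum, D11.parseval e he ψ, hψ]
    norm_num
  have htr : X.trace = 0 := by
    rw [hXdef, Matrix.trace_sub, hρtr, hσtr, sub_self]
  have hμsum : ∑ i, hherm.eigenvalues i = 0 := by
    have h := D11.trace_eq_sum_eigenvalues hherm
    rw [htr] at h
    exact_mod_cast h.symm
  have horth : ∀ i j, star ⇑(hherm.eigenvectorBasis i) ⬝ᵥ ⇑(hherm.eigenvectorBasis j)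
      = if i = j then 1 else 0 := by
    intro i j
    have h := orthonormal_iff_ite.mp hherm.eigenvectorBasis.orthonormal i j
    rw [EuclideanSpace.inner_eq_star_dotProduct, dotProduct_comm] at h
    exact h
  have hVunit : ∀ i, ∑ j, ‖hherm.eigenvectorBasis i j‖^2 = 1 := by
    intro i
    have h := horth i i
    rw [if_pos rfl, D11.star_dot_self] at h
    exact_mod_cast h
  have hμ_eq : ∀ i, ((hherm.eigenvalues i : ℝ) : ℂ)
      = star ⇑(hherm.eigenvectorBasis i) ⬝ᵥ (X *ᵥ ⇑(hherm.eigenvectorBasis i)) := by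
    intro i
    rw [hherm.mulVec_eigenvectorBasis, dotProduct_smul]
    have h1 : star ⇑(hherm.eigenvectorBasis i) ⬝ᵥ ⇑(hherm.eigenvectorBasis i) = 1 := by
      simpa using horth i i
    rw [h1, Complex.real_smul, mul_one]
  have hμ_val : ∀ i, hherm.eigenvalues i
      = ‖star ⇑(hherm.eigenvectorBasis i) ⬝ᵥ ψ‖^2
        - ∑ k, ‖star (e k) ⬝ᵥ ψ‖^2 * ‖star (e k) ⬝ᵥ ⇑(hherm.eigenvectorBasis i)‖^2 := by
    intro i
    have h := hμ_eq i
    rw [hQX] at h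
    exact_mod_cast h
  have hμle : ∀ i, hherm.eigenvalues i ≤ 1 - 1/(d:ℝ) := by
    intro i
    rw [hμ_val i]
    exact hbnd _ (hVunit i)
  have huniq : ∀ i j, 0 < hherm.eigenvalues i → 0 < hherm.eigenvalues j → i = j := by
    intro i j hi hj
    by_contra hne
    set Vi : Fin d → ℂ := ⇑(hherm.eigenvectorBasis i) with hVi
    set Vj : Fin d → ℂ := ⇑(hherm.eigenvectorBasis j) with hVj
    set α : ℂ := star Vi ⬝ᵥ ψ with hα
    set β : ℂ := star Vj ⬝ᵥ ψ with hβ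
    set u : Fin d → ℂ := (starRingEnd ℂ β) • Vi - (starRingEnd ℂ α) • Vj with hu
    have hustar : star u = β • star Vi - α • star Vj := by
      rw [hu]
      ext k
      simp [Complex.star_def, mul_comm]
    have hu_psi : star u ⬝ᵥ ψ = 0 := by
      rw [hustar, sub_dotProduct, smul_dotProduct, smul_dotProduct,
        ← hα, ← hβ]
      simp only [smul_eq_mul]
      ring
    have hXu : X *ᵥ u = ((starRingEnd ℂ β) * (hherm.eigenvalues i : ℂ)) • Vi
        - ((starRingEnd ℂ α) * (hherm.eigenvalues j : ℂ)) • Vj := by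
      rw [hu, Matrix.mulVec_sub, Matrix.mulVec_smul, Matrix.mulVec_smul,
        hherm.mulVec_eigenvectorBasis, hherm.mulVec_eigenvectorBasis]
      have hwl : ∀ (m : Fin d) (kk : Fin d),
          (WithLp.equiv 2 (Fin d → ℂ)) (hherm.eigenvectorBasis m) kk
            = hherm.eigenvectorBasis m kk := fun _ _ => rfl
      have hVik : ∀ kk, Vi kk = hherm.eigenvectorBasis i kk := fun _ => rfl
      have hVjk : ∀ kk, Vj kk = hherm.eigenvectorBasis j kk := fun _ => rfl
      ext k
      simp only [Pi.sub_apply, Pi.smul_apply, smul_eq_mul, Complex.real_smul, hwl, hVik, hVjk]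
      ring
    have hval : star u ⬝ᵥ (X *ᵥ u)
        = ((‖β‖^2 * hherm.eigenvalues i + ‖α‖^2 * hherm.eigenvalues j : ℝ) : ℂ) := by
      rw [hXu, hustar]
      rw [sub_dotProduct, smul_dotProduct, smul_dotProduct,
        dotProduct_sub, dotProduct_sub, dotProduct_smul,
        dotProduct_smul, dotProduct_smul, dotProduct_smul]
      have hii : star Vi ⬝ᵥ Vi = 1 := by simpa using horth i i
      have hjj : star Vj ⬝ᵥ Vj = 1 := by simpa using horth j j
      have hij : star Vi ⬝ᵥ Vj = 0 := by simpa [hne] using horth i j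
      have hji : star Vj ⬝ᵥ Vi = 0 := by simpa [Ne.symm hne] using horth j i
      rw [hii, hjj, hij, hji]
      simp only [smul_eq_mul, mul_one, mul_zero, sub_zero, zero_sub, mul_neg]
      have hb := D11.mul_conj_self β
      have ha := D11.mul_conj_self α
      push_cast at hb ha ⊢
      linear_combination ((hherm.eigenvalues i : ℝ) : ℂ) * hb
        + ((hherm.eigenvalues j : ℝ) : ℂ) * ha
    have hle0 : ‖β‖^2 * hherm.eigenvalues i + ‖α‖^2 * hherm.eigenvalues j ≤ 0 := by
      have h := hval.symm.trans (hQX u)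
      rw [hu_psi] at h
      have h2 : (‖β‖^2 * hherm.eigenvalues i + ‖α‖^2 * hherm.eigenvalues j : ℝ)
          = ‖(0:ℂ)‖^2 - ∑ k, ‖star (e k) ⬝ᵥ ψ‖^2 * ‖star (e k) ⬝ᵥ u‖^2 := by
        exact_mod_cast h
      rw [h2]
      simp only [norm_zero]
      have hnn : (0:ℝ) ≤ ∑ k, ‖star (e k) ⬝ᵥ ψ‖^2 * ‖star (e k) ⬝ᵥ u‖^2 :=
        Finset.sum_nonneg fun k _ => mul_nonneg (sq_nonneg _) (sq_nonneg _)
      nlinarith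
    have hβsq : ‖β‖^2 ≤ 0 := by
      by_contra hcon
      push_neg at hcon
      nlinarith [mul_pos hcon hi, mul_nonneg (sq_nonneg ‖α‖) hj.le]
    have hβ0 : ‖β‖ = 0 :=
      (pow_eq_zero_iff (by norm_num : (2:ℕ) ≠ 0)).mp (le_antisymm hβsq (sq_nonneg _))
    have hμj : hherm.eigenvalues j ≤ 0 := by
      rw [hμ_val j]
      have hψβ : ‖star ⇑(hherm.eigenvectorBasis j) ⬝ᵥ ψ‖ = 0 := hβ0
      rw [hψβ]
      have hnn : (0:ℝ) ≤ ∑ k, ‖star (e k) ⬝ᵥ ψ‖^2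
          * ‖star (e k) ⬝ᵥ ⇑(hherm.eigenvectorBasis j)‖^2 :=
        Finset.sum_nonneg fun k _ => mul_nonneg (sq_nonneg _) (sq_nonneg _)
      nlinarith
    linarith
  have habs2 : ∑ i, |hherm.eigenvalues i| = 2 * ∑ i, max (hherm.eigenvalues i) 0 := by
    have h : ∀ i : Fin d, |hherm.eigenvalues i| = 2 * max (hherm.eigenvalues i) 0
        - hherm.eigenvalues i := by
      intro i
      rcases le_total (hherm.eigenvalues i) 0 with h|h
      · rw [abs_of_nonpos h, max_eq_right h]; ring
      · rw [abs_of_nonneg h, max_eq_left h]; ring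
    simp_rw [h]
    rw [Finset.sum_sub_distrib, hμsum, Finset.mul_sum, sub_zero]
  have hposle : ∑ i, max (hherm.eigenvalues i) 0 ≤ 1 - 1/(d:ℝ) := by
    by_cases hex : ∃ i, 0 < hherm.eigenvalues i
    · obtain ⟨i0, hi0⟩ := hex
      have heq : ∑ i, max (hherm.eigenvalues i) 0 = hherm.eigenvalues i0 := by
        rw [Finset.sum_eq_single i0
          (fun j _ hj => max_eq_right (not_lt.mp (fun h => hj (huniq j i0 h hi0))))
          (by simp)]
        exact max_eq_left hi0.le
      rw [heq]
      exact hμle i0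
    · push_neg at hex
      rw [Finset.sum_eq_zero (fun i _ => max_eq_right (hex i))]
      have : (1:ℝ)/d ≤ 1 := by rw [div_le_one hd']; exact_mod_cast hd
      linarith
  constructor
  · rw [htn, habs2]
    linarith [hposle]
  · intro hp
    set c : ℂ := ((d:ℝ)⁻¹ : ℂ) with hc
    have hσ1 : σ = c • (1 : Matrix (Fin d) (Fin d) ℂ) := by
      rw [hσ]
      have h : ∀ i : Fin d, ((‖star (e i) ⬝ᵥ ψ‖^2 : ℝ):ℂ) = c := by
        intro i
        rw [hp i, hc]
        push_cast
        rw [one_div]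
      simp_rw [h]
      rw [← Finset.smul_sum, D11.sum_proj e he]
    set Y : Matrix (Fin d) (Fin d) ℂ :=
      c • ((1 : Matrix (Fin d) (Fin d) ℂ) - ρ) + (1 - c) • ρ with hY
    have hstarc : star c = c := by
      rw [hc]; simp [Complex.star_def, Complex.conj_ofReal]
    have hstar1c : star (1 - c) = 1 - c := by
      rw [star_sub, hstarc, star_one]
    have hYherm : Y.IsHermitian := by
      show Yᴴ = Y
      rw [hY, Matrix.conjTranspose_add, Matrix.conjTranspose_smul, Matrix.conjTranspose_smul,
        Matrix.conjTranspose_sub, Matrix.conjTranspose_one, hhermρ.eq, hstarc, hstar1c]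
    have hcnn : (0:ℝ) ≤ (d:ℝ)⁻¹ := by positivity
    have hc1 : (d:ℝ)⁻¹ ≤ 1 := by
      rw [inv_le_one_iff₀]
      right
      exact_mod_cast hd
    have hYpsd : Y.PosSemidef := by
      refine Matrix.PosSemidef.of_dotProduct_mulVec_nonneg hYherm fun x => ?_
      have hY1 : star x ⬝ᵥ (((1 : Matrix (Fin d) (Fin d) ℂ) - ρ) *ᵥ x)
          = (((∑ i, ‖x i‖^2) - ‖star x ⬝ᵥ ψ‖^2 : ℝ) : ℂ) := by
        rw [Matrix.sub_mulVec, dotProduct_sub, Matrix.one_mulVec,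
          D11.star_dot_self, hQρ]
        push_cast
        ring
      have hmv : Y *ᵥ x = c • (((1 : Matrix (Fin d) (Fin d) ℂ) - ρ) *ᵥ x)
          + (1 - c) • (ρ *ᵥ x) := by
        rw [hY, Matrix.add_mulVec, Matrix.smul_mulVec, Matrix.smul_mulVec]
      rw [hmv, dotProduct_add, dotProduct_smul, dotProduct_smul,
        hY1, hQρ]
      have hcast : c • ((((∑ i, ‖x i‖^2) - ‖star x ⬝ᵥ ψ‖^2 : ℝ)) : ℂ)
          + (1 - c) • ((‖star x ⬝ᵥ ψ‖^2 : ℝ) : ℂ)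
          = (((d:ℝ)⁻¹ * ((∑ i, ‖x i‖^2) - ‖star x ⬝ᵥ ψ‖^2)
              + (1 - (d:ℝ)⁻¹) * ‖star x ⬝ᵥ ψ‖^2 : ℝ) : ℂ) := by
        rw [hc]
        simp only [smul_eq_mul]
        push_cast
        ring
      rw [hcast]
      rw [Complex.zero_le_real]
      have hCS : ‖star x ⬝ᵥ ψ‖^2 ≤ (∑ i, ‖x i‖^2) := by
        have h := D11.cauchy_schwarz_dot x ψ
        rw [hψ, mul_one] at h
        exact h
      nlinarith [sq_nonneg ‖star x ⬝ᵥ ψ‖]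
    have hXX : Y ^ 2 = Xᴴ * X := by
      have hXh : Xᴴ = X := hherm.eq
      rw [hXh]
      have hXform : X = ρ - c • (1 : Matrix (Fin d) (Fin d) ℂ) := by
        rw [hXdef, hσ1]
      rw [hXform]
      have hYalt : Y = c • (1 : Matrix (Fin d) (Fin d) ℂ) + (1 - 2*c) • ρ := by
        rw [hY, smul_sub]
        module
      rw [hYalt, pow_two]
      simp only [Matrix.add_mul, Matrix.mul_add, Matrix.sub_mul, Matrix.mul_sub,
        Matrix.smul_mul, Matrix.mul_smul, Matrix.mul_one, Matrix.one_mul, hρ2,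
        smul_smul]
      module
    have hsqrt := D11.traceNorm_of_sq_eq hYpsd hXX
    have htrY : traceNorm X = (d:ℝ)⁻¹ * ((d:ℝ) - 1) + (1 - (d:ℝ)⁻¹) := by
      rw [hsqrt, hY]
      rw [Matrix.trace_add, Matrix.trace_smul, Matrix.trace_smul, Matrix.trace_sub,
        Matrix.trace_one, hρtr]
      rw [hc]
      simp only [smul_eq_mul, mul_one]
      push_cast
      simp [Complex.add_re, Complex.mul_re, Complex.ofReal_re, Complex.ofReal_im,
        Complex.sub_re, Complex.one_re, Complex.one_im, Complex.natCast_re,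
        Complex.natCast_im]
    rw [htrY]
    have hdne : (d:ℝ) ≠ 0 := ne_of_gt hd'
    field_simp
    ring
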